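/- The information distance D_I(X,Y) = max(H(X|Y), H(Y|X)) satisfies the triangle inequality: D_I(X,Y) ≤ D_I(X,Z) + D_I(Z,Y). -/

import Mathlib

open Real

/-- Shannon entropy of a discrete random variable `X` on a finite probability
space with weights `p`. -/
noncomputable def ent {Ω S : Type*} [Fintype Ω] [Fintype S] [DecidableEq S]
    (p : Ω → ℝ) (X : Ω → S) : ℝ :=
  ∑ s : S, Real.negMulLog (∑ ω ∈ Finset.univ.filter (fun ω => X ω = s), p ω)

/-- Conditional entropy `H(X|Y) = H(X,Y) - H(Y)`. -/
noncomputable def condEnt {Ω S T : Type*} [Fintype Ω] [Fintype S] [Fintype T]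
    [DecidableEq S] [DecidableEq T] (p : Ω → ℝ) (X : Ω → S) (Y : Ω → T) : ℝ :=
  ent p (fun ω => (X ω, Y ω)) - ent p Y

/-- Mutual information `I(X;Y) = H(X) + H(Y) - H(X,Y)`. -/
noncomputable def mutualInfo {Ω S T : Type*} [Fintype Ω] [Fintype S] [Fintype T]
    [DecidableEq S] [DecidableEq T] (p : Ω → ℝ) (X : Ω → S) (Y : Ω → T) : ℝ :=
  ent p X + ent p Y - ent p (fun ω => (X ω, Y ω))

section Aux

open Finset

/-- The distribution of `X` under weights `p`. -/
noncomputable def distOf {Ω A : Type*} [Fintype Ω] [DecidableEq A]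
    (p : Ω → ℝ) (X : Ω → A) : A → ℝ :=
  fun a => ∑ ω ∈ Finset.univ.filter (fun ω => X ω = a), p ω

lemma ent_eq_sum {Ω S : Type*} [Fintype Ω] [Fintype S] [DecidableEq S] (p : Ω → ℝ) (X : Ω → S) :
    ent p X = ∑ a : S, Real.negMulLog (distOf p X a) := rfl

lemma distOf_nonneg {Ω A : Type*} [Fintype Ω] [DecidableEq A]
    (p : Ω → ℝ) (hp0 : ∀ ω, 0 ≤ p ω) (X : Ω → A) (a : A) :
    0 ≤ distOf p X a :=
  Finset.sum_nonneg fun ω _ => hp0 ω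

lemma distOf_comp {Ω A B : Type*} [Fintype Ω] [Fintype A] [DecidableEq A] [DecidableEq B]
    (p : Ω → ℝ) (X : Ω → A) (g : A → B) (b : B) :
    distOf p (fun ω => g (X ω)) b = ∑ a ∈ Finset.univ.filter (fun a => g a = b), distOf p X a := by
  unfold distOf
  simp only [Finset.sum_filter]
  have hpush : ∀ (a : A), (if g a = b then ∑ ω : Ω, (if X ω = a then p ω else 0) else 0)
      = ∑ ω : Ω, (if g a = b then (if X ω = a then p ω else 0) else 0) := by
    intro a; split <;> simp
  simp only [hpush]
  rw [Finset.sum_comm]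
  congr 1; funext ω
  have : ∀ x : A, (if g x = b then if X ω = x then p ω else 0 else 0)
      = if x = X ω then (if g (X ω) = b then p ω else 0) else 0 := by
    intro x
    by_cases h : x = X ω <;> by_cases h2 : g x = b <;> simp [h, h2, eq_comm]
  simp only [this]
  rw [Finset.sum_ite_eq' Finset.univ (X ω) (fun _ => if g (X ω) = b then p ω else 0)]
  simp

lemma negMulLog_add_le {a b : ℝ} (ha : 0 ≤ a) (hb : 0 ≤ b) :
    negMulLog (a + b) ≤ negMulLog a + negMulLog b := by
  have h1 : -a * log (a + b) ≤ negMulLog a := by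
    rcases eq_or_lt_of_le ha with h | h
    · simp [negMulLog, ← h]
    · have : log a ≤ log (a + b) := Real.log_le_log h (by linarith)
      simp only [negMulLog, neg_mul]
      nlinarith
  have h2 : -b * log (a + b) ≤ negMulLog b := by
    rcases eq_or_lt_of_le hb with h | h
    · simp [negMulLog, ← h]
    · have : log b ≤ log (a + b) := Real.log_le_log h (by linarith)
      simp only [negMulLog, neg_mul]
      nlinarith
  calc negMulLog (a + b) = -a * log (a+b) + -b * log (a+b) := by simp [negMulLog]; ring
  _ ≤ _ := add_le_add h1 h2

lemma negMulLog_sum_le {I : Type*} [DecidableEq I] (s : Finset I) (f : I → ℝ)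
    (hf : ∀ i ∈ s, 0 ≤ f i) :
    negMulLog (∑ i ∈ s, f i) ≤ ∑ i ∈ s, negMulLog (f i) := by
  induction s using Finset.induction_on with
  | empty => simp
  | insert _ _ hx ih =>
    rename_i a s
    rw [Finset.sum_insert hx, Finset.sum_insert hx]
    have h := negMulLog_add_le (hf a (mem_insert_self a s))
      (Finset.sum_nonneg fun i hi => hf i (mem_insert_of_mem hi))
    have h' := ih fun i hi => hf i (mem_insert_of_mem hi)
    linarith

/-- Entropy cannot increase under a function: `H(g ∘ X) ≤ H(X)`. -/
lemma ent_comp_le {Ω A B : Type*} [Fintype Ω] [Fintype A] [Fintype B] [DecidableEq A]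
    [DecidableEq B] (p : Ω → ℝ) (hp0 : ∀ ω, 0 ≤ p ω) (X : Ω → A) (g : A → B) :
    ent p (fun ω => g (X ω)) ≤ ent p X := by
  rw [ent_eq_sum, ent_eq_sum]
  calc ∑ b : B, negMulLog (distOf p (fun ω => g (X ω)) b)
      ≤ ∑ b : B, ∑ a ∈ Finset.univ.filter (fun a => g a = b), negMulLog (distOf p X a) := by
        apply Finset.sum_le_sum
        intro b _
        rw [distOf_comp]
        exact negMulLog_sum_le _ _ fun a _ => distOf_nonneg p hp0 X a
    _ = ∑ a : A, negMulLog (distOf p X a) := Finset.sum_fiberwise _ _ _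

/-- Symmetry of the joint entropy. -/
lemma ent_pair_comm {Ω S T : Type*} [Fintype Ω] [Fintype S] [Fintype T] [DecidableEq S]
    [DecidableEq T] (p : Ω → ℝ) (X : Ω → S) (Y : Ω → T) :
    ent p (fun ω => (X ω, Y ω)) = ent p (fun ω => (Y ω, X ω)) := by
  rw [ent_eq_sum, ent_eq_sum]
  refine Fintype.sum_equiv (Equiv.prodComm S T) _ _ fun c => ?_
  unfold distOf
  congr 1
  refine Finset.sum_congr (Finset.filter_congr fun ω _ => ?_) fun _ _ => rfl
  simp [Prod.ext_iff, and_comm]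

variable {S T U : Type*} [Fintype S] [Fintype T] [Fintype U]
  [DecidableEq S] [DecidableEq T] [DecidableEq U]

/-- Submodularity core: `H(X,Y,Z) + H(Z) ≤ H(X,Z) + H(Y,Z)` in terms of a joint
distribution `q` on `S × T × U`. -/
lemma submod_core (q : S × T × U → ℝ) (hq : ∀ a, 0 ≤ q a) :
    (∑ a : S × T × U, negMulLog (q a))
      + ∑ u : U, negMulLog (∑ s : S, ∑ t : T, q (s, t, u))
    ≤ (∑ x : S × U, negMulLog (∑ t : T, q (x.1, t, x.2)))
      + ∑ y : T × U, negMulLog (∑ s : S, q (s, y.1, y.2)) := by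
  set mSU : S → U → ℝ := fun s u => ∑ t : T, q (s, t, u) with hmSU
  set mTU : T → U → ℝ := fun t u => ∑ s : S, q (s, t, u) with hmTU
  set mU : U → ℝ := fun u => ∑ s : S, ∑ t : T, q (s, t, u) with hmU
  have hmSU0 : ∀ s u, 0 ≤ mSU s u := fun s u => Finset.sum_nonneg fun t _ => hq _
  have hmTU0 : ∀ t u, 0 ≤ mTU t u := fun t u => Finset.sum_nonneg fun s _ => hq _
  have hmU0 : ∀ u, 0 ≤ mU u := fun u => Finset.sum_nonneg fun s _ => hmSU0 s u
  have hsum_mTU : ∀ u, ∑ t : T, mTU t u = mU u := by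
    intro u; rw [hmU]; exact Finset.sum_comm
  -- per-term inequality
  have key : ∀ s t u, q (s, t, u) * (log (mSU s u) + log (mTU t u)
        - log (q (s, t, u)) - log (mU u))
      ≤ mSU s u * mTU t u / mU u - q (s, t, u) := by
    intro s t u
    rcases eq_or_lt_of_le (hq (s, t, u)) with h | h
    · rw [← h]
      simp only [zero_mul, sub_zero, sub_nonneg]
      have := div_nonneg (mul_nonneg (hmSU0 s u) (hmTU0 t u)) (hmU0 u)
      linarith
    · have h1 : q (s, t, u) ≤ mSU s u := Finset.single_le_sum (fun t _ => hq (s, t, u)) (mem_univ t)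
      have h2 : q (s, t, u) ≤ mTU t u := Finset.single_le_sum (fun s _ => hq (s, t, u)) (mem_univ s)
      have h3 : mSU s u ≤ mU u := Finset.single_le_sum (fun s _ => hmSU0 s u) (mem_univ s)
      have hS : 0 < mSU s u := lt_of_lt_of_le h h1
      have hT : 0 < mTU t u := lt_of_lt_of_le h h2
      have hU : 0 < mU u := lt_of_lt_of_le hS h3
      have hx : 0 < mSU s u * mTU t u / (q (s, t, u) * mU u) := by positivity
      have hlog : log (mSU s u) + log (mTU t u) - log (q (s, t, u)) - log (mU u)
          = log (mSU s u * mTU t u / (q (s, t, u) * mU u)) := by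
        rw [Real.log_div (by positivity) (by positivity), Real.log_mul hS.ne' hT.ne',
          Real.log_mul h.ne' hU.ne']
        ring
      rw [hlog]
      have hle := Real.log_le_sub_one_of_pos hx
      have step : q (s, t, u) * log (mSU s u * mTU t u / (q (s, t, u) * mU u))
          ≤ q (s, t, u) * (mSU s u * mTU t u / (q (s, t, u) * mU u) - 1) :=
        mul_le_mul_of_nonneg_left hle h.le
      have alg : q (s, t, u) * (mSU s u * mTU t u / (q (s, t, u) * mU u) - 1)
          = mSU s u * mTU t u / mU u - q (s, t, u) := by
        field_simp
      linarith
  -- sum of the bounds is zero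
  have swap3 : ∀ f : S → T → U → ℝ, ∑ s : S, ∑ t : T, ∑ u : U, f s t u
      = ∑ u : U, ∑ s : S, ∑ t : T, f s t u := by
    intro f
    calc ∑ s : S, ∑ t : T, ∑ u : U, f s t u
        = ∑ s : S, ∑ u : U, ∑ t : T, f s t u :=
          Finset.sum_congr rfl fun s _ => Finset.sum_comm
      _ = ∑ u : U, ∑ s : S, ∑ t : T, f s t u := Finset.sum_comm
  have sumq : ∑ s : S, ∑ t : T, ∑ u : U, q (s, t, u) = ∑ u : U, mU u := swap3 _
  have sumRHS : ∑ s : S, ∑ t : T, ∑ u : U, (mSU s u * mTU t u / mU u - q (s, t, u)) = 0 := by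
    simp only [Finset.sum_sub_distrib]
    rw [sumq, swap3 (fun s t u => mSU s u * mTU t u / mU u)]
    have : ∀ u : U, ∑ s : S, ∑ t : T, mSU s u * mTU t u / mU u = mU u := by
      intro u
      have : ∑ s : S, ∑ t : T, mSU s u * mTU t u / mU u
          = (∑ s : S, mSU s u) * (∑ t : T, mTU t u) / mU u := by
        rw [Finset.sum_mul, Finset.sum_div]
        refine Finset.sum_congr rfl fun s _ => ?_
        rw [Finset.mul_sum, Finset.sum_div]
      rw [this, hsum_mTU u]
      have hs : ∑ s : S, mSU s u = mU u := rfl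
      rw [hs]
      rcases eq_or_lt_of_le (hmU0 u) with h | h
      · rw [← h]; simp
      · field_simp
    rw [Finset.sum_congr rfl fun u _ => this u]
    ring
  -- main inequality on the log side
  have main : ∑ s : S, ∑ t : T, ∑ u : U, q (s, t, u) * (log (mSU s u) + log (mTU t u)
      - log (q (s, t, u)) - log (mU u)) ≤ 0 := by
    calc ∑ s : S, ∑ t : T, ∑ u : U, q (s, t, u) * (log (mSU s u) + log (mTU t u)
          - log (q (s, t, u)) - log (mU u))
        ≤ ∑ s : S, ∑ t : T, ∑ u : U, (mSU s u * mTU t u / mU u - q (s, t, u)) :=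
          Finset.sum_le_sum fun s _ => Finset.sum_le_sum fun t _ =>
            Finset.sum_le_sum fun u _ => key s t u
      _ = 0 := sumRHS
  -- expansions of the four entropy sums
  have swap3' : ∀ f : S → T → U → ℝ, ∑ s : S, ∑ t : T, ∑ u : U, f s t u
      = ∑ t : T, ∑ u : U, ∑ s : S, f s t u := by
    intro f
    calc ∑ s : S, ∑ t : T, ∑ u : U, f s t u = ∑ t : T, ∑ s : S, ∑ u : U, f s t u :=
        Finset.sum_comm
      _ = ∑ t : T, ∑ u : U, ∑ s : S, f s t u :=
        Finset.sum_congr rfl fun t _ => Finset.sum_comm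
  have eQ : ∑ a : S × T × U, negMulLog (q a)
      = ∑ s : S, ∑ t : T, ∑ u : U, -(q (s, t, u) * log (q (s, t, u))) := by
    rw [Fintype.sum_prod_type]
    refine Finset.sum_congr rfl fun s _ => ?_
    rw [Fintype.sum_prod_type]
    simp [negMulLog, neg_mul]
  have eU : ∑ u : U, negMulLog (mU u)
      = ∑ s : S, ∑ t : T, ∑ u : U, -(q (s, t, u) * log (mU u)) := by
    rw [swap3 (fun s t u => -(q (s, t, u) * log (mU u)))]
    refine Finset.sum_congr rfl fun u _ => ?_
    have h1 : mU u * log (mU u) = ∑ s : S, ∑ t : T, q (s, t, u) * log (mU u) := by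
      rw [hmU]
      rw [Finset.sum_mul]
      exact Finset.sum_congr rfl fun s _ => Finset.sum_mul _ _ _
    have h2 : negMulLog (mU u) = -(mU u * log (mU u)) := by rw [negMulLog]; ring
    rw [h2, h1]
    simp
  have eSU : ∑ x : S × U, negMulLog (mSU x.1 x.2)
      = ∑ s : S, ∑ t : T, ∑ u : U, -(q (s, t, u) * log (mSU s u)) := by
    rw [Fintype.sum_prod_type]
    refine Finset.sum_congr rfl fun s _ => ?_
    rw [show (∑ t : T, ∑ u : U, -(q (s, t, u) * log (mSU s u)))
        = ∑ u : U, ∑ t : T, -(q (s, t, u) * log (mSU s u)) from Finset.sum_comm]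
    refine Finset.sum_congr rfl fun u _ => ?_
    have h1 : mSU s u * log (mSU s u) = ∑ t : T, q (s, t, u) * log (mSU s u) := by
      rw [hmSU]
      exact Finset.sum_mul _ _ _
    have h2 : negMulLog (mSU s u) = -(mSU s u * log (mSU s u)) := by rw [negMulLog]; ring
    rw [h2, h1]
    simp
  have eTU : ∑ y : T × U, negMulLog (mTU y.1 y.2)
      = ∑ s : S, ∑ t : T, ∑ u : U, -(q (s, t, u) * log (mTU t u)) := by
    rw [swap3' (fun s t u => -(q (s, t, u) * log (mTU t u)))]
    rw [Fintype.sum_prod_type]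
    refine Finset.sum_congr rfl fun t _ => ?_
    refine Finset.sum_congr rfl fun u _ => ?_
    have h1 : mTU t u * log (mTU t u) = ∑ s : S, q (s, t, u) * log (mTU t u) := by
      rw [hmTU]
      exact Finset.sum_mul _ _ _
    have h2 : negMulLog (mTU t u) = -(mTU t u * log (mTU t u)) := by rw [negMulLog]; ring
    rw [h2, h1]
    simp
  have split : ∀ s t u, q (s, t, u) * (log (mSU s u) + log (mTU t u)
        - log (q (s, t, u)) - log (mU u))
      = (-(q (s, t, u) * log (q (s, t, u))) + -(q (s, t, u) * log (mU u)))
        - (-(q (s, t, u) * log (mSU s u)) + -(q (s, t, u) * log (mTU t u))) := by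
    intro s t u; ring
  simp only [split, Finset.sum_sub_distrib, Finset.sum_add_distrib] at main
  rw [show (∑ x : S × U, negMulLog (∑ t : T, q (x.1, t, x.2)))
      = ∑ x : S × U, negMulLog (mSU x.1 x.2) from rfl,
    show (∑ y : T × U, negMulLog (∑ s : S, q (s, y.1, y.2)))
      = ∑ y : T × U, negMulLog (mTU y.1 y.2) from rfl]
  rw [eQ, eU, eSU, eTU]
  linarith

end Aux

theorem informationDistance_triangle {Ω S T U : Type*} [Fintype Ω] [Fintype S] [Fintype T]
    [Fintype U] [DecidableEq S] [DecidableEq T] [DecidableEq U]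
    (p : Ω → ℝ) (hp0 : ∀ ω, 0 ≤ p ω) (hp1 : ∑ ω, p ω = 1)
    (X : Ω → S) (Y : Ω → T) (Z : Ω → U) :
    max (condEnt p X Y) (condEnt p Y X) ≤
      max (condEnt p X Z) (condEnt p Z X) + max (condEnt p Z Y) (condEnt p Y Z) := by
  classical
  set W : Ω → S × T × U := fun ω => (X ω, Y ω, Z ω) with hW
  set q : S × T × U → ℝ := distOf p W with hq
  have hq0 : ∀ a, 0 ≤ q a := fun a => distOf_nonneg p hp0 W a
  -- fiber sums
  have hfib1 : ∀ x : S × U, ∑ a ∈ Finset.univ.filter (fun a : S × T × U => (a.1, a.2.2) = x), q a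
      = ∑ t : T, q (x.1, t, x.2) := by
    intro x
    rw [Finset.sum_filter, Fintype.sum_prod_type]
    simp [Fintype.sum_prod_type, Prod.ext_iff, Finset.sum_ite_eq', ite_and]
  have hfib2 : ∀ y : T × U, ∑ a ∈ Finset.univ.filter (fun a : S × T × U => a.2 = y), q a
      = ∑ s : S, q (s, y.1, y.2) := by
    intro y
    rw [Finset.sum_filter, Fintype.sum_prod_type]
    simp [Fintype.sum_prod_type, Prod.ext_iff, Finset.sum_ite_eq', ite_and]
  have hfib3 : ∀ u : U, ∑ a ∈ Finset.univ.filter (fun a : S × T × U => a.2.2 = u), q a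
      = ∑ s : S, ∑ t : T, q (s, t, u) := by
    intro u
    rw [Finset.sum_filter, Fintype.sum_prod_type]
    simp [Fintype.sum_prod_type, Finset.sum_ite_eq']
  -- entropy bridges
  have eXZ : ent p (fun ω => (X ω, Z ω)) = ∑ x : S × U, negMulLog (∑ t : T, q (x.1, t, x.2)) := by
    have h : (fun ω => (X ω, Z ω))
        = fun ω => ((fun a : S × T × U => (a.1, a.2.2)) (W ω)) := rfl
    rw [h, ent_eq_sum]
    refine Finset.sum_congr rfl fun x _ => ?_
    rw [distOf_comp p W (fun a => (a.1, a.2.2)) x, hfib1 x]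
  have eYZ : ent p (fun ω => (Y ω, Z ω)) = ∑ y : T × U, negMulLog (∑ s : S, q (s, y.1, y.2)) := by
    have h : (fun ω => (Y ω, Z ω))
        = fun ω => ((fun a : S × T × U => a.2) (W ω)) := rfl
    rw [h, ent_eq_sum]
    refine Finset.sum_congr rfl fun y _ => ?_
    rw [distOf_comp p W (fun a => a.2) y, hfib2 y]
  have eZ : ent p Z = ∑ u : U, negMulLog (∑ s : S, ∑ t : T, q (s, t, u)) := by
    have h : Z = fun ω => ((fun a : S × T × U => a.2.2) (W ω)) := rfl
    rw [h, ent_eq_sum]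
    refine Finset.sum_congr rfl fun u _ => ?_
    rw [distOf_comp p W (fun a => a.2.2) u, hfib3 u]
  have eW : ent p W = ∑ a : S × T × U, negMulLog (q a) := ent_eq_sum p W
  -- monotonicity : H(X,Y) ≤ H(X,Y,Z)
  have hmono : ent p (fun ω => (X ω, Y ω)) ≤ ent p W := by
    have h : (fun ω => (X ω, Y ω))
        = fun ω => ((fun a : S × T × U => (a.1, a.2.1)) (W ω)) := rfl
    rw [h]
    exact ent_comp_le p hp0 W (fun a => (a.1, a.2.1))
  -- submodularity : H(X,Y,Z) + H(Z) ≤ H(X,Z) + H(Y,Z)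
  have hsub : ent p W + ent p Z
      ≤ ent p (fun ω => (X ω, Z ω)) + ent p (fun ω => (Y ω, Z ω)) := by
    rw [eW, eZ, eXZ, eYZ]
    exact submod_core q hq0
  have keyineq : ent p (fun ω => (X ω, Y ω)) + ent p Z
      ≤ ent p (fun ω => (X ω, Z ω)) + ent p (fun ω => (Y ω, Z ω)) := by linarith
  -- final arithmetic
  unfold condEnt
  rw [ent_pair_comm p Y X, ent_pair_comm p Z X, ent_pair_comm p Z Y]
  set HX := ent p X
  set HY := ent p Y
  set HZ := ent p Z
  set HXY := ent p (fun ω => (X ω, Y ω))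
  set HXZ := ent p (fun ω => (X ω, Z ω))
  set HYZ := ent p (fun ω => (Y ω, Z ω))
  have m1 : HXZ - HZ ≤ max (HXZ - HZ) (HXZ - HX) := le_max_left _ _
  have m2 : HXZ - HX ≤ max (HXZ - HZ) (HXZ - HX) := le_max_right _ _
  have m3 : HYZ - HY ≤ max (HYZ - HY) (HYZ - HZ) := le_max_left _ _
  have m4 : HYZ - HZ ≤ max (HYZ - HY) (HYZ - HZ) := le_max_right _ _
  rcases le_total HX HY with hcase | hcase
  · apply max_le <;> linarith
  · apply max_le <;> linarith
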